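/- Let b be a positive integer dividing n. The proportion of permutations in S_n all of whose cycle lengths are divisible by b equals the coefficient of u^n in the power series (1 - u^b)^{-1/b}. -/

import Mathlib

open Equiv Function Finset

namespace Stmt6Aux

variable {α : Type*} [Fintype α] [DecidableEq α]

lemma perm_isPeriodicPt (σ : Equiv.Perm α) (a : α) :
    IsPeriodicPt ⇑σ (orderOf σ) a := by
  unfold IsPeriodicPt IsFixedPt
  rw [Equiv.Perm.iterate_eq_pow, pow_orderOf_eq_one]
  rfl

lemma perm_mp_pos (σ : Equiv.Perm α) (a : α) : 0 < minimalPeriod ⇑σ a :=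
  (perm_isPeriodicPt σ a).minimalPeriod_pos (orderOf_pos σ)

lemma perm_mp_le_card (σ : Equiv.Perm α) (a : α) :
    minimalPeriod ⇑σ a ≤ Fintype.card α := by
  classical
  have h := iterate_injOn_Iio_minimalPeriod (f := ⇑σ) (x := a)
  have hcard : (Finset.range (minimalPeriod ⇑σ a)).card =
      ((Finset.range (minimalPeriod ⇑σ a)).image fun k => (⇑σ)^[k] a).card := by
    rw [Finset.card_image_of_injOn]
    intro i hi j hj hij
    exact h (Finset.mem_range.mp hi) (Finset.mem_range.mp hj) hij
  calc minimalPeriod ⇑σ a = (Finset.range (minimalPeriod ⇑σ a)).card := by simp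
    _ = _ := hcard
    _ ≤ Fintype.card α := Finset.card_le_univ _

/-- the count of "good" permutations -/
noncomputable def gc (b : ℕ) (α : Type*) : ℕ :=
  Nat.card {σ : Equiv.Perm α // ∀ a : α, b ∣ minimalPeriod ⇑σ a}

lemma isPeriodicPt_conj_iff {β : Type*} (f : α ≃ β) (g : Equiv.Perm α) (a : α) (n : ℕ) :
    IsPeriodicPt ⇑(f.permCongr g) n (f a) ↔ IsPeriodicPt ⇑g n a := by
  constructor
  · intro h
    have hs : Semiconj ⇑f.symm ⇑(f.permCongr g) ⇑g := by
      intro y; simp [Equiv.permCongr_apply]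
    simpa using h.map hs
  · intro h
    have hs : Semiconj ⇑f ⇑g ⇑(f.permCongr g) := by
      intro y; simp [Equiv.permCongr_apply]
    exact h.map hs

lemma minimalPeriod_permCongr {β : Type*} (f : α ≃ β) (σ : Equiv.Perm α) (a : α) :
    minimalPeriod ⇑(f.permCongr σ) (f a) = minimalPeriod ⇑σ a := by
  rw [minimalPeriod_eq_minimalPeriod_iff]
  intro n
  exact isPeriodicPt_conj_iff f σ a n

lemma gc_congr {β : Type*} (b : ℕ) (f : α ≃ β) : gc b α = gc b β := by
  apply Nat.card_congr
  refine Equiv.subtypeEquiv (Equiv.permCongr f) ?_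
  intro σ
  constructor
  · intro h a
    have := minimalPeriod_permCongr f σ (f.symm a)
    rw [Equiv.apply_symm_apply] at this
    rw [this]; exact h _
  · intro h a
    have := minimalPeriod_permCongr f σ a
    rw [← this]
    exact h (f a)

lemma minimalPeriod_formPerm (l : List α) (hl : l.Nodup) {a : α} (ha : a ∈ l) :
    minimalPeriod ⇑l.formPerm a = l.length := by
  obtain ⟨i, hi, rfl⟩ := List.getElem_of_mem ha
  have hper : IsPeriodicPt ⇑l.formPerm l.length l[i] := by
    unfold IsPeriodicPt IsFixedPt
    rw [Equiv.Perm.iterate_eq_pow, List.formPerm_pow_length_eq_one_of_nodup l hl]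
    rfl
  have hpos : 0 < l.length := lt_of_le_of_lt (Nat.zero_le i) hi
  have hdvd := hper.minimalPeriod_dvd
  set m := minimalPeriod ⇑l.formPerm l[i] with hm
  have hmpos : 0 < m := hper.minimalPeriod_pos hpos
  have hmle : m ≤ l.length := Nat.le_of_dvd hpos hdvd
  have hiter : (l.formPerm ^ m) l[i] = l[i] := by
    rw [← Equiv.Perm.iterate_eq_pow]
    exact isPeriodicPt_minimalPeriod _ _
  rw [List.formPerm_pow_apply_getElem l hl m i hi] at hiter
  have hidx : (i + m) % l.length = i := by
    have := (List.Nodup.getElem_inj_iff hl (hi := Nat.mod_lt _ hpos) (hj := hi)).mp hiter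
    exact this
  rcases Nat.lt_or_ge (i + m) l.length with h | h
  · rw [Nat.mod_eq_of_lt h] at hidx; omega
  · have h2 : i + m - l.length < l.length := by omega
    rw [Nat.mod_eq_sub_mod h, Nat.mod_eq_of_lt h2] at hidx
    omega



/-- the orbit finset determined by the data -/
def obs (t : ℕ) (x : α) (e : Fin (t-1) ↪ {y : α // y ≠ x}) : Finset α :=
  insert x (Finset.univ.image fun i => ((e i : {y : α // y ≠ x}) : α))

def lst (t : ℕ) (x : α) (e : Fin (t-1) ↪ {y : α // y ≠ x}) : List α :=
  x :: List.ofFn (fun i => ((e i : {y : α // y ≠ x}) : α))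

variable {t : ℕ} {x : α} {e : Fin (t-1) ↪ {y : α // y ≠ x}}

lemma mem_obs {a : α} : a ∈ obs t x e ↔ a = x ∨ ∃ i, ((e i : {y : α // y ≠ x}) : α) = a := by
  simp [obs]

lemma mem_lst_iff {a : α} : a ∈ lst t x e ↔ a ∈ obs t x e := by
  simp [lst, obs, List.mem_ofFn, eq_comm]

lemma length_lst' : (lst t x e).length = (t-1)+1 := by simp [lst]

lemma nodup_lst : (lst t x e).Nodup := by
  refine List.nodup_cons.mpr ⟨?_, ?_⟩
  · rw [List.mem_ofFn]
    rintro ⟨i, hi⟩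
    exact (e i).2 hi
  · rw [List.nodup_ofFn]
    intro i j hij
    exact e.injective (Subtype.ext hij)

lemma lst_get_zero (h : 0 < (lst t x e).length) : (lst t x e)[0] = x := rfl

lemma lst_get_succ {j : ℕ} (h : j < t-1) :
    (lst t x e)[j+1]'(by rw [length_lst']; omega) = ((e ⟨j, h⟩ : {y : α // y ≠ x}) : α) := by
  simp [lst]

lemma card_obs (ht : 0 < t) : (obs t x e).card = t := by
  rw [obs, Finset.card_insert_of_notMem, Finset.card_image_of_injective _
    (fun i j hij => e.injective (Subtype.ext hij))]
  · simp; omega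
  · simp only [Finset.mem_image]
    rintro ⟨i, -, hi⟩
    exact (e i).2 hi

/-- the permutation built from the data -/
def bperm (t : ℕ) (x : α) (e : Fin (t-1) ↪ {y : α // y ≠ x})
    (τ : Equiv.Perm {a : α // a ∉ obs t x e}) : Equiv.Perm α :=
  (lst t x e).formPerm * Equiv.Perm.ofSubtype τ

lemma formPerm_pow_fix (l : List α) {a : α} (ha : a ∉ l) (k : ℕ) :
    (l.formPerm ^ k) a = a := by
  induction k with
  | zero => rfl
  | succ k ih =>
    rw [pow_succ, Equiv.Perm.mul_apply, List.formPerm_apply_of_notMem ha]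
    exact ih

variable {τ : Equiv.Perm {a : α // a ∉ obs t x e}}

lemma bperm_comm :
    Commute ((lst t x e).formPerm) (Equiv.Perm.ofSubtype τ) := by
  apply Equiv.Perm.Disjoint.commute
  intro a
  by_cases h : a ∈ obs t x e
  · right
    exact Equiv.Perm.ofSubtype_apply_of_not_mem τ (by simpa using h)
  · left
    exact List.formPerm_apply_of_notMem (by rwa [mem_lst_iff])

lemma bperm_pow_not_mem {a : α} (ha : a ∉ obs t x e) (k : ℕ) :
    ((bperm t x e τ) ^ k) a = (((τ ^ k) ⟨a, ha⟩ : {a : α // a ∉ obs t x e}) : α) := by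
  rw [bperm, bperm_comm.mul_pow, Equiv.Perm.mul_apply, ← map_pow,
    Equiv.Perm.ofSubtype_apply_of_mem (τ ^ k) ha]
  exact formPerm_pow_fix _ (by rw [mem_lst_iff]; exact ((τ ^ k) ⟨a, ha⟩).2) k

lemma bperm_pow_mem {a : α} (ha : a ∈ obs t x e) (k : ℕ) :
    ((bperm t x e τ) ^ k) a = ((lst t x e).formPerm ^ k) a := by
  rw [bperm, bperm_comm.mul_pow, Equiv.Perm.mul_apply, ← map_pow,
    Equiv.Perm.ofSubtype_apply_of_not_mem (τ ^ k) (by simpa using ha)]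

lemma bperm_mp_mem {a : α} (ha : a ∈ obs t x e) (ht : 0 < t) :
    minimalPeriod ⇑(bperm t x e τ) a = t := by
  have h1 : minimalPeriod ⇑(bperm t x e τ) a = minimalPeriod ⇑(lst t x e).formPerm a := by
    rw [minimalPeriod_eq_minimalPeriod_iff]
    intro n
    unfold IsPeriodicPt IsFixedPt
    rw [Equiv.Perm.iterate_eq_pow, Equiv.Perm.iterate_eq_pow]
    rw [show ((bperm t x e τ ^ n)) a = _ from bperm_pow_mem ha n]
  rw [h1, minimalPeriod_formPerm _ nodup_lst (mem_lst_iff.mpr ha), length_lst']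
  omega

lemma bperm_mp_not_mem {a : α} (ha : a ∉ obs t x e) :
    minimalPeriod ⇑(bperm t x e τ) a = minimalPeriod ⇑τ ⟨a, ha⟩ := by
  rw [minimalPeriod_eq_minimalPeriod_iff]
  intro n
  unfold IsPeriodicPt IsFixedPt
  rw [Equiv.Perm.iterate_eq_pow, Equiv.Perm.iterate_eq_pow,
    show ((bperm t x e τ ^ n)) a = _ from bperm_pow_not_mem ha n]
  constructor
  · intro h; exact Subtype.ext h
  · intro h; exact congrArg Subtype.val h

lemma bperm_pow_x (ht : 0 < t) {k : ℕ} (hk : k < t) :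
    ((bperm t x e τ) ^ k) x = (lst t x e)[k]'(by rw [length_lst']; omega) := by
  rw [bperm_pow_mem (Finset.mem_insert_self _ _) k]
  have h2 := List.formPerm_pow_apply_getElem (lst t x e) nodup_lst k 0
    (by rw [length_lst']; omega)
  exact h2.trans (by congr 1; rw [length_lst', show t-1+1 = t from by omega, Nat.zero_add, Nat.mod_eq_of_lt hk])

lemma bperm_mp_x (ht : 0 < t) : minimalPeriod ⇑(bperm t x e τ) x = t :=
  bperm_mp_mem (Finset.mem_insert_self _ _) ht

lemma bperm_good {b : ℕ} (hbt : b ∣ t) (ht : 0 < t)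
    (hτ : ∀ z, b ∣ minimalPeriod ⇑τ z) (a : α) :
    b ∣ minimalPeriod ⇑(bperm t x e τ) a := by
  by_cases ha : a ∈ obs t x e
  · rw [bperm_mp_mem ha ht]; exact hbt
  · rw [bperm_mp_not_mem ha]; exact hτ _


section
variable {t : ℕ} {x : α}

/-- the data embedding extracted from a permutation -/
def emb (σ : Equiv.Perm α) (hmp : minimalPeriod ⇑σ x = t) : Fin (t-1) ↪ {y : α // y ≠ x} where
  toFun i := ⟨(σ ^ (i.1+1)) x, by
    intro hEq
    have hlt := i.isLt
    have h1 : (⇑σ)^[i.1+1] x = (⇑σ)^[0] x := by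
      rw [Equiv.Perm.iterate_eq_pow]; simpa using hEq
    have h2 := (iterate_eq_iterate_iff_of_lt_minimalPeriod
      (by rw [hmp]; omega) (by rw [hmp]; omega)).mp h1
    omega⟩
  inj' := by
    intro i j hij
    have hi := i.isLt; have hj := j.isLt
    have h0 : (σ ^ (i.1+1)) x = (σ ^ (j.1+1)) x := congrArg Subtype.val hij
    have h1 : (⇑σ)^[i.1+1] x = (⇑σ)^[j.1+1] x := by
      rw [Equiv.Perm.iterate_eq_pow, Equiv.Perm.iterate_eq_pow]; exact h0
    have h2 := (iterate_eq_iterate_iff_of_lt_minimalPeriod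
      (by rw [hmp]; omega) (by rw [hmp]; omega)).mp h1
    exact Fin.ext (by omega)

lemma sigma_pow_t (σ : Equiv.Perm α) (hmp : minimalPeriod ⇑σ x = t) : (σ ^ t) x = x := by
  have h : (⇑σ)^[t] x = x := by rw [← hmp]; exact isPeriodicPt_minimalPeriod ⇑σ x
  rwa [Equiv.Perm.iterate_eq_pow] at h

lemma mem_obs_emb (σ : Equiv.Perm α) (hmp : minimalPeriod ⇑σ x = t) (a : α) :
    a ∈ obs t x (emb σ hmp) ↔ ∃ k, k < t ∧ (σ ^ k) x = a := by
  have ht : 0 < t := hmp ▸ perm_mp_pos σ x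
  rw [mem_obs]
  constructor
  · rintro (rfl | ⟨i, hi⟩)
    · exact ⟨0, ht, by simp⟩
    · exact ⟨i.1+1, by have := i.isLt; omega, hi⟩
  · rintro ⟨k, hk, rfl⟩
    match k with
    | 0 => left; simp
    | (j+1) => right; exact ⟨⟨j, by omega⟩, rfl⟩

lemma obs_emb_inv (σ : Equiv.Perm α) (hmp : minimalPeriod ⇑σ x = t) :
    ∀ a, a ∉ obs t x (emb σ hmp) ↔ σ a ∉ obs t x (emb σ hmp) := by
  have ht : 0 < t := hmp ▸ perm_mp_pos σ x
  intro a
  rw [not_iff_not, mem_obs_emb, mem_obs_emb]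
  constructor
  · rintro ⟨k, hk, rfl⟩
    by_cases h : k+1 < t
    · exact ⟨k+1, h, by rw [pow_succ', Equiv.Perm.mul_apply]⟩
    · have hkt : k+1 = t := by omega
      have h2 : σ ((σ ^ k) x) = x := by
        rw [← Equiv.Perm.mul_apply, ← pow_succ', hkt, sigma_pow_t σ hmp]
      exact ⟨0, ht, by simpa using h2.symm⟩
  · rintro ⟨k, hk, hEq⟩
    match k with
    | 0 =>
      have h2 : σ ((σ ^ (t-1)) x) = σ a := by
        rw [← Equiv.Perm.mul_apply, ← pow_succ', show t-1+1 = t from by omega,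
          sigma_pow_t σ hmp]
        simpa using hEq
      exact ⟨t-1, by omega, σ.injective h2⟩
    | (j+1) =>
      have h2 : σ ((σ ^ j) x) = σ a := by
        rw [← Equiv.Perm.mul_apply, ← pow_succ']; exact hEq
      exact ⟨j, by omega, σ.injective h2⟩

lemma lst_emb_get (σ : Equiv.Perm α) (hmp : minimalPeriod ⇑σ x = t) {k : ℕ} (hk : k < t) :
    (lst t x (emb σ hmp))[k]'(by rw [length_lst']; omega) = (σ ^ k) x := by
  match k with
  | 0 => simp [lst_get_zero]
  | (j+1) =>
    rw [lst_get_succ (by omega)]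
    rfl

lemma mp_subtypePerm (σ : Equiv.Perm α) {p : α → Prop} (h : ∀ y, p y ↔ p (σ y)) (a : α)
    (ha : p a) : minimalPeriod ⇑(σ.subtypePerm (fun y => (h y).symm)) ⟨a, ha⟩ = minimalPeriod ⇑σ a := by
  rw [minimalPeriod_eq_minimalPeriod_iff]
  intro n
  unfold IsPeriodicPt IsFixedPt
  rw [Equiv.Perm.iterate_eq_pow, Equiv.Perm.iterate_eq_pow, Equiv.Perm.subtypePerm_pow]
  rw [Subtype.ext_iff]
  simp [Equiv.Perm.subtypePerm_apply]

end


lemma lst_emb_get' (σ : Equiv.Perm α) (hmp : minimalPeriod ⇑σ x = t) {k : ℕ}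
    (hk : k < (lst t x (emb σ hmp)).length) :
    (lst t x (emb σ hmp))[k] = (σ ^ k) x := by
  have hk' : k < t := by
    have := hk; rw [length_lst'] at this
    have ht : 0 < t := hmp ▸ perm_mp_pos σ x
    omega
  exact lst_emb_get σ hmp hk'

lemma fib_card (b t : ℕ) (x : α) (hbt : b ∣ t) (ht : 0 < t) :
    Nat.card {σ : Equiv.Perm α // (∀ a : α, b ∣ minimalPeriod ⇑σ a) ∧ minimalPeriod ⇑σ x = t}
      = (Fintype.card α - 1).descFactorial (t-1) * gc b (Fin (Fintype.card α - t)) := by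
  classical
  have hbij : Function.Bijective (fun d : (Σ e : Fin (t-1) ↪ {y : α // y ≠ x},
      {τ : Equiv.Perm {a : α // a ∉ obs t x e} // ∀ z, b ∣ minimalPeriod ⇑τ z}) =>
      (⟨bperm t x d.1 d.2.1, fun a => bperm_good hbt ht d.2.2 a, bperm_mp_x ht⟩ :
        {σ : Equiv.Perm α // (∀ a : α, b ∣ minimalPeriod ⇑σ a) ∧ minimalPeriod ⇑σ x = t})) := by
    constructor
    · rintro ⟨e₁, τ₁, hτ₁⟩ ⟨e₂, τ₂, hτ₂⟩ hEq
      have hσ : bperm t x e₁ τ₁ = bperm t x e₂ τ₂ := congrArg Subtype.val hEq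
      have he : e₁ = e₂ := by
        apply DFunLike.ext
        intro i
        apply Subtype.ext
        have hi := i.isLt
        have v1 : (bperm t x e₁ τ₁ ^ (i.1+1)) x = ((e₁ i : {y : α // y ≠ x}) : α) := by
          rw [bperm_pow_x ht (by omega), lst_get_succ i.isLt]
        have v2 : (bperm t x e₂ τ₂ ^ (i.1+1)) x = ((e₂ i : {y : α // y ≠ x}) : α) := by
          rw [bperm_pow_x ht (by omega), lst_get_succ i.isLt]
        rw [hσ] at v1
        exact v1.symm.trans v2
      subst he
      simp only [bperm] at hσ
      have hof := mul_left_cancel hσ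
      have hττ : τ₁ = τ₂ := by
        apply Equiv.ext
        rintro ⟨a, ha⟩
        apply Subtype.ext
        have h1 := Equiv.Perm.ofSubtype_apply_of_mem τ₁ ha
        have h2 := Equiv.Perm.ofSubtype_apply_of_mem τ₂ ha
        rw [hof] at h1
        exact h1.symm.trans h2
      subst hττ
      exact congrArg _ (Subtype.ext rfl)
    · rintro ⟨σ, hg, hmp⟩
      refine ⟨⟨emb σ hmp, σ.subtypePerm (fun y => (obs_emb_inv σ hmp y).symm), ?_⟩, ?_⟩
      · rintro ⟨a, ha⟩
        rw [mp_subtypePerm σ (obs_emb_inv σ hmp) a ha]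
        exact hg a
      · apply Subtype.ext
        show bperm t x (emb σ hmp) (σ.subtypePerm (fun y => (obs_emb_inv σ hmp y).symm)) = σ
        apply Equiv.ext
        intro a
        by_cases ha : a ∈ obs t x (emb σ hmp)
        · obtain ⟨k, hk, rfl⟩ := (mem_obs_emb σ hmp a).mp ha
          have h1 : bperm t x (emb σ hmp) (σ.subtypePerm (fun y => (obs_emb_inv σ hmp y).symm)) ((σ^k) x)
              = ((lst t x (emb σ hmp)).formPerm) ((σ^k) x) := by
            have := bperm_pow_mem (τ := σ.subtypePerm (fun y => (obs_emb_inv σ hmp y).symm)) ha 1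
            simpa using this
          have hlen : (lst t x (emb σ hmp)).length = t := by
            rw [length_lst']; omega
          have h2 := List.formPerm_apply_getElem (lst t x (emb σ hmp)) nodup_lst k
            (by rw [hlen]; exact hk)
          rw [lst_emb_get' σ hmp, lst_emb_get' σ hmp] at h2
          rw [hlen] at h2
          rw [h1, h2]
          by_cases hk1 : k+1 < t
          · rw [Nat.mod_eq_of_lt hk1, pow_succ', Equiv.Perm.mul_apply]
          · have hmod : (k+1) % t = 0 := by
              have : k + 1 = t := by omega
              simp [this]
            rw [hmod]
            have h4 : σ ((σ^k) x) = x := by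
              rw [← Equiv.Perm.mul_apply, ← pow_succ', show k+1 = t from by omega,
                sigma_pow_t σ hmp]
            simpa using h4.symm
        · have h1 := bperm_pow_not_mem (τ := σ.subtypePerm (fun y => (obs_emb_inv σ hmp y).symm)) ha 1
          simp only [pow_one] at h1
          rw [h1]
          simp [Equiv.Perm.subtypePerm_apply]
  rw [← Nat.card_eq_of_bijective _ hbij, Nat.card_eq_fintype_card, Fintype.card_sigma]
  have hsum : ∀ e : Fin (t-1) ↪ {y : α // y ≠ x},
      Fintype.card {τ : Equiv.Perm {a : α // a ∉ obs t x e} // ∀ z, b ∣ minimalPeriod ⇑τ z}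
        = gc b (Fin (Fintype.card α - t)) := by
    intro e
    rw [← Nat.card_eq_fintype_card]
    have h0 : Nat.card {τ : Equiv.Perm {a : α // a ∉ obs t x e} //
        ∀ z, b ∣ minimalPeriod ⇑τ z} = gc b {a : α // a ∉ obs t x e} := rfl
    rw [h0, gc_congr b (Fintype.equivFinOfCardEq (n := Fintype.card α - t) ?_)]
    rw [Fintype.card_subtype_compl, Fintype.card_coe, card_obs ht]
  rw [Finset.sum_congr rfl (fun e _ => hsum e), Finset.sum_const, smul_eq_mul,
    Finset.card_univ, Fintype.card_embedding_eq, Fintype.card_fin]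
  congr 2
  simp [Fintype.card_subtype_compl]


lemma gc_fin_zero (b : ℕ) : gc b (Fin 0) = 1 := by
  haveI : Unique {σ : Equiv.Perm (Fin 0) // ∀ a : Fin 0, b ∣ minimalPeriod ⇑σ a} :=
    ⟨⟨1, fun a => a.elim0⟩, by rintro ⟨σ, h⟩; exact Subtype.ext (Equiv.ext fun a => a.elim0)⟩
  exact Nat.card_unique

lemma gc_step (b n : ℕ) (hb : 0 < b) (hn : 0 < n) :
    gc b (Fin n) = ∑ t ∈ (Finset.range (n+1)).filter (fun t => b ∣ t ∧ 0 < t),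
      (n-1).descFactorial (t-1) * gc b (Fin (n - t)) := by
  classical
  set x : Fin n := ⟨0, hn⟩
  rw [gc, Nat.card_eq_fintype_card, Fintype.card_subtype]
  rw [Finset.card_eq_sum_card_fiberwise
    (f := fun σ : Equiv.Perm (Fin n) => minimalPeriod ⇑σ x)
    (t := (Finset.range (n+1)).filter (fun t => b ∣ t ∧ 0 < t)) ?_]
  · apply Finset.sum_congr rfl
    intro t htmem
    simp only [Finset.mem_filter, Finset.mem_range] at htmem
    obtain ⟨htn, hbt, ht⟩ := htmem
    rw [Finset.filter_filter]
    have hc : (Finset.filter (fun σ : Equiv.Perm (Fin n) =>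
        (∀ a, b ∣ minimalPeriod ⇑σ a) ∧ minimalPeriod ⇑σ x = t) Finset.univ).card
        = Nat.card {σ : Equiv.Perm (Fin n) //
            (∀ a, b ∣ minimalPeriod ⇑σ a) ∧ minimalPeriod ⇑σ x = t} := by
      rw [Nat.card_eq_fintype_card, Fintype.card_subtype]
    rw [hc, fib_card b t x hbt ht, Fintype.card_fin]
  · intro σ hσ
    simp only [Finset.mem_coe, Finset.mem_filter, Finset.mem_univ, true_and] at hσ ⊢
    refine ⟨Finset.mem_range.mpr ?_, hσ x, perm_mp_pos σ x⟩
    have := perm_mp_le_card σ x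
    rw [Fintype.card_fin] at this
    omega

/-- the normalized proportion sequence -/
noncomputable def Aseq (b m : ℕ) : ℝ := (gc b (Fin (m*b)) : ℝ) / (Nat.factorial (m*b))

lemma Aseq_rec (b : ℕ) (hb : 0 < b) (m : ℕ) :
    (m*b : ℝ) * Aseq b m = ∑ j ∈ Finset.range m, Aseq b j := by
  rcases Nat.eq_zero_or_pos m with rfl | hm
  · simp [Aseq]
  · have hn : 0 < m*b := Nat.mul_pos hm hb
    have hstep := gc_step b (m*b) hb hn
    have hT : (Finset.range (m*b+1)).filter (fun t => b ∣ t ∧ 0 < t)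
        = (Finset.Icc 1 m).image (· * b) := by
      ext t
      simp only [Finset.mem_filter, Finset.mem_range, Finset.mem_image, Finset.mem_Icc]
      constructor
      · rintro ⟨h1, ⟨k, rfl⟩, h3⟩
        refine ⟨k, ⟨?_, ?_⟩, mul_comm k b⟩
        · rcases Nat.eq_zero_or_pos k with rfl | h
          · simp at h3
          · exact h
        · have hbk : b * k ≤ m * b := by omega
          rw [mul_comm b k] at hbk
          exact Nat.le_of_mul_le_mul_right hbk hb
      · rintro ⟨k, ⟨hk1, hk2⟩, rfl⟩
        exact ⟨by have := Nat.mul_le_mul_right b hk2; omega,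
          dvd_mul_left b k, by positivity⟩
    rw [hT, Finset.sum_image (fun i _ j _ h => Nat.eq_of_mul_eq_mul_right hb h)] at hstep
    -- now hstep : gc b (Fin (m*b)) = ∑ k in Icc 1 m, df(m*b-1, k*b-1) * gc b (Fin (m*b - k*b))
    have hcast : (gc b (Fin (m*b)) : ℝ)
        = ∑ k ∈ Finset.Icc 1 m, ((m*b-1).descFactorial (k*b-1) : ℝ)
            * (gc b (Fin ((m-k)*b)) : ℝ) := by
      rw [hstep]
      push_cast
      apply Finset.sum_congr rfl
      intro k hk
      rw [Nat.sub_mul]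
    have hfact : ∀ k ∈ Finset.Icc 1 m, ((m*b-1).descFactorial (k*b-1) : ℝ)
        = ((m*b-1).factorial : ℝ) / (((m-k)*b).factorial : ℝ) := by
      intro k hk
      rw [Finset.mem_Icc] at hk
      have hb1 : 1*b ≤ k*b := Nat.mul_le_mul_right b hk.1
      have hb2 : k*b ≤ m*b := Nat.mul_le_mul_right b hk.2
      have hkb1 : k*b-1 ≤ m*b-1 := by omega
      have hsub : (m*b-1) - (k*b-1) = (m-k)*b := by
        rw [Nat.sub_mul]
        omega
      have hmain := Nat.factorial_mul_descFactorial hkb1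
      rw [hsub] at hmain
      have h2 : (m*b-1).descFactorial (k*b-1) * ((m-k)*b).factorial
          = (m*b-1).factorial := by rw [mul_comm]; exact hmain
      rw [eq_div_iff (by positivity)]
      exact_mod_cast h2
    have hAk : ∀ k ∈ Finset.Icc 1 m, ((m*b-1).descFactorial (k*b-1) : ℝ)
        * (gc b (Fin ((m-k)*b)) : ℝ) = ((m*b-1).factorial : ℝ) * Aseq b (m-k) := by
      intro k hk
      rw [hfact k hk, Aseq]
      have hne : (((m-k)*b).factorial : ℝ) ≠ 0 := by positivity
      field_simp
    have hre : ∑ k ∈ Finset.Icc 1 m, Aseq b (m-k) = ∑ j ∈ Finset.range m, Aseq b j := by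
      have hinj : ∀ i ∈ Finset.Icc 1 m, ∀ j ∈ Finset.Icc 1 m,
          m - i = m - j → i = j := by
        intro i hi j hj h
        rw [Finset.mem_Icc] at hi hj
        omega
      have himg : (Finset.Icc 1 m).image (fun k => m - k) = Finset.range m := by
        ext j
        simp only [Finset.mem_image, Finset.mem_Icc, Finset.mem_range]
        constructor
        · rintro ⟨k, hk, rfl⟩; omega
        · intro hj; exact ⟨m - j, by omega, by omega⟩
      rw [← himg, Finset.sum_image hinj]
    have hG : (gc b (Fin (m*b)) : ℝ)
        = ((m*b-1).factorial : ℝ) * ∑ j ∈ Finset.range m, Aseq b j := by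
      rw [hcast, Finset.sum_congr rfl hAk, ← Finset.mul_sum, hre]
    have hF : ((Nat.factorial (m*b) : ℕ) : ℝ) = (m*b : ℝ) * ((m*b-1).factorial : ℝ) := by
      have := (Nat.mul_factorial_pred hn.ne').symm
      exact_mod_cast congrArg (Nat.cast (R := ℝ)) this
    have hfne : ((m*b-1).factorial : ℝ) ≠ 0 := by positivity
    have hmb : (m*b : ℝ) ≠ 0 := by
      have : (0:ℝ) < (m:ℝ)*b := by
        have hm' : (0:ℝ) < m := by exact_mod_cast hm
        have hb' : (0:ℝ) < b := by exact_mod_cast hb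
        positivity
      exact ne_of_gt this
    rw [Aseq, hG, hF]
    field_simp

lemma Aseq_eq_prod (b : ℕ) (hb : 0 < b) (m : ℕ) :
    Aseq b m = ∏ j ∈ Finset.Icc 1 m, (((j:ℝ)-1)*(b:ℝ)+1)/((j:ℝ)*(b:ℝ)) := by
  induction m with
  | zero => simp [Aseq, gc_fin_zero]
  | succ m ih =>
    have h1 := Aseq_rec b hb (m+1)
    have h2 := Aseq_rec b hb m
    rw [Finset.sum_range_succ, ← h2] at h1
    have hb0 : (((m:ℝ)+1)*(b:ℝ)) ≠ 0 := by positivity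
    have hA : Aseq b (m+1) = ((m:ℝ)*(b:ℝ)+1)/(((m:ℝ)+1)*(b:ℝ)) * Aseq b m := by
      rw [div_mul_eq_mul_div, eq_div_iff hb0]
      push_cast at h1
      linear_combination h1
    rw [hA, ih, Finset.prod_Icc_succ_top (by omega : 1 ≤ m+1)]
    push_cast
    ring

end Stmt6Aux

/-- For `b ∣ n`, the proportion of permutations in `S_n` all of whose cycle
lengths (including fixed points, whose cycle length is 1) are divisible by `b`
equals `∏_{j=1}^{n/b} ((j-1)b+1)/(jb)`, the coefficient of `u^n` in
`(1-u^b)^{-1/b}`. -/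
theorem stmt6 (n b : ℕ) (hn : 0 < n) (hb : 0 < b) (hdvd : b ∣ n) :
    (Nat.card {x : Equiv.Perm (Fin n) //
        ∀ a : Fin n, b ∣ Function.minimalPeriod (⇑x) a} : ℝ) / Nat.factorial n =
      ∏ j ∈ Finset.Icc 1 (n / b), (((j : ℝ) - 1) * b + 1) / (j * b) := by
  obtain ⟨m, rfl⟩ := hdvd
  have hm : 0 < m := by
    rcases Nat.eq_zero_or_pos m with rfl | h
    · simp at hn
    · exact h
  rw [Nat.mul_div_cancel_left m hb]
  have h := Stmt6Aux.Aseq_eq_prod b hb m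
  rw [Stmt6Aux.Aseq, Stmt6Aux.gc] at h
  rw [show m*b = b*m from mul_comm m b] at h
  exact h
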